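/- arXiv:1710.01774 — 3 statements merged into one kernel-verified Lean document; each statement's English description precedes it below -/
import Mathlib

section
/- Let V₁,…,Vₙ be rank one valuation rings of the field F and let B be a Prüfer G-domain with quotient field F. Then V₁ ∩ ⋯ ∩ Vₙ ∩ B is a Prüfer G-domain with quotient field F. -/
open Set

/-- A subring `V` of a field `F` is a valuation ring of `F` (with quotient field `F`). -/
def IsValSubring (F : Type*) [Field F] (V : Subring F) : Prop :=
  ∀ t : F, t ≠ 0 → t ∈ V ∨ t⁻¹ ∈ V

/-- The Zariski-Riemann space of the field `F`: the set of valuation rings of `F`. -/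
def Zar (F : Type*) [Field F] : Type _ := {V : Subring F // IsValSubring F V}

/-- The patch (constructible) topology on `Zar F`, generated by the sets
`{V : x ∈ V}` and `{V : y ∉ V}` for `x, y ∈ F`. -/
instance Zar.patchTopology (F : Type*) [Field F] : TopologicalSpace (Zar F) :=
  TopologicalSpace.generateFrom
    ({S | ∃ x : F, S = {V : Zar F | x ∈ V.1}} ∪ {S | ∃ y : F, S = {V : Zar F | y ∉ V.1}})

variable {F : Type*} [Field F]

/-- The maximal ideal of a valuation ring of `F`, as a subset of `F`. -/
def mIdeal (V : Zar F) : Set F := {x : F | x ∈ V.1 ∧ (x = 0 ∨ x⁻¹ ∉ V.1)}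

/-- `A(X)`: the intersection of the valuation rings in `X`, as a subset of `F`. -/
def aSet (X : Set (Zar F)) : Set F := ⋂ V ∈ X, ((V : Zar F).1 : Set F)

/-- `A(X)` as a subring of `F`. -/
def ASub (X : Set (Zar F)) : Subring F := ⨅ V ∈ X, (V : Zar F).1

/-- `J(X)`: the intersection of the maximal ideals of the valuation rings in `X`. -/
def jSet (X : Set (Zar F)) : Set F := ⋂ V ∈ X, mIdeal V

/-- The set of limit points of `X` in the patch topology of `Zar F`. -/
def limPts (X : Set (Zar F)) : Set (Zar F) :=
  {V : Zar F | ∀ U : Set (Zar F), IsOpen U → V ∈ U → ∃ W ∈ X, W ≠ V ∧ W ∈ U}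


/-- A valuation ring of `F` has rank one iff it is a maximal proper valuation subring of `F`. -/
def RankOne (V : Zar F) : Prop :=
  V.1 ≠ ⊤ ∧ ∀ W : Zar F, V.1 ≤ W.1 → W.1 ≠ ⊤ → W.1 = V.1

/-- A subset `A` of `F` has quotient field `F` if every element of `F` is a quotient
of elements of `A`. -/
def HasQFSet (A : Set F) : Prop := ∀ x : F, ∃ a ∈ A, ∃ b ∈ A, b ≠ 0 ∧ x = a / b

/-- The localization of the subring `A` of `F` at the ideal `M`, realized inside `F`. -/
def locSet (A : Subring F) (M : Ideal A) : Set F :=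
  {x : F | ∃ a b : A, b ∉ M ∧ (b : F) ≠ 0 ∧ x = (a : F) / (b : F)}

/-- `A` is a Prüfer domain with quotient field `F`: `F` is the quotient field of `A` and
the localization of `A` at each maximal ideal is a valuation ring of `F`. -/
def IsPruferOf (A : Subring F) : Prop :=
  HasQFSet (A : Set F) ∧ ∀ M : Ideal A, M.IsMaximal →
    ∀ t : F, t ≠ 0 → t ∈ locSet A M ∨ t⁻¹ ∈ locSet A M

/-- `A` is a G-domain: the intersection of its nonzero prime ideals is nonzero. -/
def IsGDomainOf (A : Subring F) : Prop :=
  ∃ x : A, x ≠ 0 ∧ ∀ P : Ideal A, P.IsPrime → P ≠ ⊥ → x ∈ P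

/-- `A` is a Prüfer G-domain with quotient field `F`. -/
def IsPruferG (A : Subring F) : Prop := IsPruferOf A ∧ IsGDomainOf A

section PruferAux

variable {F : Type*} [Field F]

lemma zar_nonmem_ne_zero {V : Zar F} {t : F} (h : t ∉ V.1) : t ≠ 0 := by
  intro h0
  apply h
  rw [h0]
  exact V.1.zero_mem

lemma zar_inv_mem {V : Zar F} {t : F} (h : t ∉ V.1) : t⁻¹ ∈ V.1 := by
  rcases V.2 t (zar_nonmem_ne_zero h) with h1 | h1
  · exact absurd h1 h
  · exact h1

/-- The archimedean property of rank one valuation rings. -/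
lemma zar_arch (V : Zar F) (hV : RankOne V) {u : F} (hu : u ∈ V.1) (hu' : u⁻¹ ∉ V.1)
    (t : F) : ∃ N : ℕ, t * u ^ N ∈ V.1 := by
  classical
  have hu0 : u ≠ 0 := by
    intro h0
    exact hu' (by rw [h0, inv_zero]; exact V.1.zero_mem)
  set W : Subring F :=
    { carrier := {s : F | ∃ N : ℕ, s * u ^ N ∈ V.1}
      one_mem' := ⟨0, by simpa using V.1.one_mem⟩
      zero_mem' := ⟨0, by simpa using V.1.zero_mem⟩
      mul_mem' := by
        rintro a b ⟨m, hm⟩ ⟨k, hk⟩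
        refine ⟨m + k, ?_⟩
        have : a * b * u ^ (m + k) = (a * u ^ m) * (b * u ^ k) := by
          rw [pow_add]; ring
        rw [this]
        exact V.1.mul_mem hm hk
      add_mem' := by
        rintro a b ⟨m, hm⟩ ⟨k, hk⟩
        refine ⟨m + k, ?_⟩
        have : (a + b) * u ^ (m + k) = (a * u ^ m) * u ^ k + (b * u ^ k) * u ^ m := by
          rw [pow_add]; ring
        rw [this]
        exact V.1.add_mem (V.1.mul_mem hm (pow_mem hu k))
          (V.1.mul_mem hk (pow_mem hu m))
      neg_mem' := by
        rintro a ⟨m, hm⟩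
        exact ⟨m, by rw [neg_mul]; exact V.1.neg_mem hm⟩ } with hWdef
  have hWval : IsValSubring F W := by
    intro s hs
    rcases V.2 s hs with h1 | h1
    · exact Or.inl ⟨0, by simpa using h1⟩
    · exact Or.inr ⟨0, by simpa using h1⟩
  by_cases hW : W = ⊤
  · have : t ∈ W := hW ▸ Subring.mem_top t
    exact this
  · have hle : V.1 ≤ W := by
      intro s hs
      exact ⟨0, by simpa using hs⟩
    have heq : (⟨W, hWval⟩ : Zar F).1 = V.1 := hV.2 ⟨W, hWval⟩ hle hW
    have huinv : u⁻¹ ∈ W := ⟨1, by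
      rw [pow_one, inv_mul_cancel₀ hu0]
      exact V.1.one_mem⟩
    rw [show W = (⟨W, hWval⟩ : Zar F).1 from rfl, heq] at huinv
    exact absurd huinv hu'

/-- Extract a decomposition `1 = b + c` with `b*τ, c*τ⁻¹ ∈ B` from the Prüfer property. -/
lemma prufer_decomp {B : Subring F}
    (hPB : ∀ M : Ideal B, M.IsMaximal → ∀ t : F, t ≠ 0 → t ∈ locSet B M ∨ t⁻¹ ∈ locSet B M)
    {τ : F} (hτ : τ ≠ 0) :
    ∃ b c : F, b ∈ B ∧ c ∈ B ∧ b + c = 1 ∧ b * τ ∈ B ∧ c * τ⁻¹ ∈ B := by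
  classical
  set J : Ideal B :=
    { carrier := {b : B | (b : F) * τ ∈ B}
      add_mem' := by
        intro a b ha hb
        show ((a + b : B) : F) * τ ∈ B
        have h : ((a + b : B) : F) * τ = (a : F) * τ + (b : F) * τ := by
          push_cast; ring
        rw [h]
        exact B.add_mem ha hb
      zero_mem' := by
        show ((0 : B) : F) * τ ∈ B
        simp only [ZeroMemClass.coe_zero, zero_mul]
        exact B.zero_mem
      smul_mem' := by
        intro c b hb
        show ((c • b : B) : F) * τ ∈ B
        have h : ((c • b : B) : F) = (c : F) * (b : F) := by
          rw [smul_eq_mul]; push_cast; ring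
        rw [h, mul_assoc]
        exact B.mul_mem c.2 hb } with hJdef
  set J' : Ideal B :=
    { carrier := {b : B | (b : F) * τ⁻¹ ∈ B}
      add_mem' := by
        intro a b ha hb
        show ((a + b : B) : F) * τ⁻¹ ∈ B
        have h : ((a + b : B) : F) * τ⁻¹ = (a : F) * τ⁻¹ + (b : F) * τ⁻¹ := by
          push_cast; ring
        rw [h]
        exact B.add_mem ha hb
      zero_mem' := by
        show ((0 : B) : F) * τ⁻¹ ∈ B
        simp only [ZeroMemClass.coe_zero, zero_mul]
        exact B.zero_mem
      smul_mem' := by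
        intro c b hb
        show ((c • b : B) : F) * τ⁻¹ ∈ B
        have h : ((c • b : B) : F) = (c : F) * (b : F) := by
          rw [smul_eq_mul]; push_cast; ring
        rw [h, mul_assoc]
        exact B.mul_mem c.2 hb } with hJ'def
  have hsup : J ⊔ J' = ⊤ := by
    by_contra h
    obtain ⟨M, hM, hle⟩ := Ideal.exists_le_maximal _ h
    rcases hPB M hM τ hτ with h1 | h1
    · obtain ⟨a, b, hbM, hb0, heq⟩ := h1
      apply hbM
      apply hle
      apply Ideal.mem_sup_left
      show (b : F) * τ ∈ B
      have : (b : F) * τ = a := by rw [heq]; field_simp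
      rw [this]; exact a.2
    · obtain ⟨a, b, hbM, hb0, heq⟩ := h1
      apply hbM
      apply hle
      apply Ideal.mem_sup_right
      show (b : F) * τ⁻¹ ∈ B
      have : (b : F) * τ⁻¹ = a := by rw [heq]; field_simp
      rw [this]; exact a.2
  have h1 : (1 : B) ∈ J ⊔ J' := by rw [hsup]; trivial
  obtain ⟨y, hy, z, hz, hyz⟩ := Submodule.mem_sup.mp h1
  refine ⟨(y : F), (z : F), y.2, z.2, ?_, hy, hz⟩
  have := congrArg (fun w : B => (w : F)) hyz
  push_cast at this
  exact this

/-- Build the Prüfer property from decompositions. -/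
lemma prufer_of_decomp {A : Subring F} (hQF : HasQFSet (A : Set F))
    (h : ∀ τ : F, τ ≠ 0 → ∃ b c : F, b ∈ A ∧ c ∈ A ∧ b + c = 1 ∧ b * τ ∈ A ∧ c * τ⁻¹ ∈ A) :
    IsPruferOf A := by
  refine ⟨hQF, fun M hM τ hτ => ?_⟩
  obtain ⟨b, c, hbA, hcA, hbc, hbt, hct⟩ := h τ hτ
  by_cases hbM : (⟨b, hbA⟩ : A) ∈ M
  · right
    have hcM : (⟨c, hcA⟩ : A) ∉ M := by
      intro hc
      apply hM.ne_top
      rw [Ideal.eq_top_iff_one]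
      have h : (⟨b, hbA⟩ : A) + ⟨c, hcA⟩ = 1 := by
        apply Subtype.ext
        push_cast
        exact hbc
      exact h ▸ M.add_mem hbM hc
    have hc0 : c ≠ 0 := by
      intro h0
      apply hcM
      have h : (⟨c, hcA⟩ : A) = 0 := Subtype.ext h0
      rw [h]
      exact M.zero_mem
    exact ⟨⟨c * τ⁻¹, hct⟩, ⟨c, hcA⟩, hcM, hc0, by rw [eq_div_iff hc0]; ring⟩
  · left
    have hb0 : b ≠ 0 := by
      intro h0
      apply hbM
      have h : (⟨b, hbA⟩ : A) = 0 := Subtype.ext h0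
      rw [h]
      exact M.zero_mem
    exact ⟨⟨b * τ, hbt⟩, ⟨b, hbA⟩, hbM, hb0, by rw [eq_div_iff hb0]; ring⟩

/-- If `A` contains an element `z` whose powers provide common denominators,
then `A` is a G-domain. -/
lemma g_of_denom {A : Subring F} {z : F} (hzA : z ∈ A) (hz0 : z ≠ 0)
    (hz : ∀ t : F, t ≠ 0 → ∃ N : ℕ, t * z ^ N ∈ A) : IsGDomainOf A := by
  refine ⟨⟨z, hzA⟩, fun h => hz0 (congrArg Subtype.val h), fun P hP hPb => ?_⟩
  obtain ⟨ρ, hρP, hρ0⟩ := Submodule.exists_mem_ne_zero_of_ne_bot hPb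
  have hρF : (ρ : F) ≠ 0 := fun h => hρ0 (Subtype.ext h)
  obtain ⟨N, hN⟩ := hz ((ρ : F)⁻¹) (inv_ne_zero hρF)
  have hpow : (⟨z, hzA⟩ : A) ^ N = ρ * ⟨(ρ : F)⁻¹ * z ^ N, hN⟩ := by
    apply Subtype.ext
    push_cast
    field_simp
  have hmem : (⟨z, hzA⟩ : A) ^ N ∈ P := by
    rw [hpow]
    exact P.mul_mem_right _ hρP
  exact hP.mem_of_pow_mem N hmem

/-- A rank one valuation ring is a Prüfer G-domain with quotient field `F`. -/
lemma val_pruferG (V : Zar F) (hV : RankOne V) : IsPruferG V.1 := by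
  classical
  have hloc : ∀ (M : Ideal V.1), M.IsMaximal → ∀ t : F, t ∈ V.1 → t ∈ locSet V.1 M := by
    intro M hM t ht
    refine ⟨⟨t, ht⟩, 1, ?_, one_ne_zero, by simp⟩
    intro h1
    exact hM.ne_top ((Ideal.eq_top_iff_one _).mpr h1)
  constructor
  · constructor
    · intro t
      by_cases ht : t ∈ V.1
      · exact ⟨t, ht, 1, V.1.one_mem, one_ne_zero, by simp⟩
      · have ht' := zar_inv_mem ht
        have ht0 : t ≠ 0 := zar_nonmem_ne_zero ht
        exact ⟨1, V.1.one_mem, t⁻¹, ht', inv_ne_zero ht0, by field_simp⟩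
    · intro M hM t ht
      by_cases htV : t ∈ V.1
      · exact Or.inl (hloc M hM t htV)
      · exact Or.inr (hloc M hM t⁻¹ (zar_inv_mem htV))
  · obtain ⟨b, hb⟩ : ∃ b : F, b ∉ V.1 := by
      by_contra h
      push_neg at h
      exact hV.1 ((Subring.eq_top_iff' V.1).mpr h)
    have hu : b⁻¹ ∈ V.1 := zar_inv_mem hb
    have hu0 : b⁻¹ ≠ 0 := inv_ne_zero (zar_nonmem_ne_zero hb)
    have hu' : (b⁻¹)⁻¹ ∉ V.1 := by rwa [inv_inv]
    exact g_of_denom hu hu0 (fun t _ => zar_arch V hV hu hu' t)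

/-- Main engine: `V ⊓ B` is a Prüfer G-domain, given a good element `x`. -/
lemma main_core (V : Zar F) (hV : RankOne V) (B : Subring F)
    (hPB : ∀ M : Ideal B, M.IsMaximal → ∀ t : F, t ≠ 0 → t ∈ locSet B M ∨ t⁻¹ ∈ locSet B M)
    {d : F} (hdB : d ∈ B) (hdV : d ∉ V.1)
    {x : F} (hxB : x ∈ B) (hx0 : x ≠ 0) (hxV : x ∈ V.1) (hxiV : x⁻¹ ∉ V.1)
    (HQ : ∀ t : F, t ≠ 0 → ∃ N : ℕ, t * x ^ N ∈ B)
    (HU : ∀ ζ : F, ζ ∈ B → ∃ ξ : F, ξ ∈ B ∧ (1 + x * ζ) * ξ = 1) :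
    IsPruferG (V.1 ⊓ B) := by
  classical
  have hd0 : d ≠ 0 := zar_nonmem_ne_zero hdV
  have hxD : x ∈ V.1 ⊓ B := Subring.mem_inf.mpr ⟨hxV, hxB⟩
  -- combined denominators
  have HQV : ∀ t : F, t ≠ 0 → ∃ N : ℕ, t * x ^ N ∈ B ∧ t * x ^ N ∈ V.1 := by
    intro t ht
    obtain ⟨N₁, h1⟩ := HQ t ht
    obtain ⟨N₂, h2⟩ := zar_arch V hV hxV hxiV t
    refine ⟨N₁ + N₂, ?_, ?_⟩
    · have : t * x ^ (N₁ + N₂) = (t * x ^ N₁) * x ^ N₂ := by rw [pow_add]; ring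
      rw [this]; exact B.mul_mem h1 (pow_mem hxB N₂)
    · have : t * x ^ (N₁ + N₂) = (t * x ^ N₂) * x ^ N₁ := by rw [pow_add]; ring
      rw [this]; exact V.1.mul_mem h2 (pow_mem hxV N₁)
  -- SEED: an element ρ ∈ B with ρ = 1 + x*ζ₀ and ρ/x ∈ V
  obtain ⟨k, hk⟩ := zar_arch V hV (zar_inv_mem hdV) (by rwa [inv_inv]) (x⁻¹ * x⁻¹)
  obtain ⟨ρ, hρB, hρeq⟩ := HU (d ^ k) (pow_mem hdB k)
  set s : F := x * d ^ k with hs_def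
  have hseq : (1 + s) * ρ = 1 := hρeq
  have hs0 : s ≠ 0 := mul_ne_zero hx0 (pow_ne_zero _ hd0)
  have hsV : s ∉ V.1 := by
    intro h
    apply hxiV
    have := V.1.mul_mem h hk
    have heq : s * (x⁻¹ * x⁻¹ * (d⁻¹) ^ k) = x⁻¹ := by
      have h1 : x * x⁻¹ = 1 := mul_inv_cancel₀ hx0
      have h2 : d ^ k * d⁻¹ ^ k = 1 := by rw [← mul_pow, mul_inv_cancel₀ hd0, one_pow]
      rw [hs_def]; linear_combination (x⁻¹ * (d ^ k * d⁻¹ ^ k)) * h1 + x⁻¹ * h2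
    rwa [heq] at this
  have hw0 : (1 : F) + s ≠ 0 := by
    intro h
    rw [h, zero_mul] at hseq
    exact zero_ne_one hseq
  have hρ_inv : ρ = (1 + s)⁻¹ := eq_inv_of_mul_eq_one_left (by rw [mul_comm] at hseq; exact hseq)
  have hρ0 : ρ ≠ 0 := by
    intro h
    rw [h, mul_zero] at hseq
    exact zero_ne_one hseq
  have h1s : (1 : F) + s ∉ V.1 := by
    intro h
    exact hsV (by simpa using V.1.sub_mem h V.1.one_mem)
  have hwinv : ((1 : F) + s)⁻¹ ∈ V.1 := zar_inv_mem h1s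
  have hsw : s * ((1 : F) + s)⁻¹ ∈ V.1 := by
    have heq : s * ((1 : F) + s)⁻¹ = 1 - (1 + s)⁻¹ := by
      field_simp
      ring
    rw [heq]
    exact V.1.sub_mem V.1.one_mem hwinv
  have hρV : ρ * x⁻¹ ∈ V.1 := by
    have heq : ρ * x⁻¹ = (s * ((1 : F) + s)⁻¹) * (x⁻¹ * x⁻¹ * (d⁻¹) ^ k) := by
      have h1 : x * x⁻¹ = 1 := mul_inv_cancel₀ hx0
      have h2 : d ^ k * d⁻¹ ^ k = 1 := by rw [← mul_pow, mul_inv_cancel₀ hd0, one_pow]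
      rw [hρ_inv, hs_def]
      linear_combination (-((1 + x * d ^ k)⁻¹ * x⁻¹ * (d ^ k * d⁻¹ ^ k))) * h1 - ((1 + x * d ^ k)⁻¹ * x⁻¹) * h2
    rw [heq]
    exact V.1.mul_mem hsw hk
  have hρform : ∃ ζ₀ : F, ζ₀ ∈ B ∧ ρ = 1 + x * ζ₀ := by
    refine ⟨-(d ^ k * ρ), B.neg_mem (B.mul_mem (pow_mem hdB k) hρB), ?_⟩
    have hseq' := hseq
    rw [hs_def] at hseq'
    linear_combination hseq'
  -- STEP-DOWN
  have step : ∀ β : F, β ∈ B → ∃ δ : F, δ ∈ B ∧ β - x * δ ∈ V.1 := by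
    intro β hβ
    obtain ⟨ζ₀, hζ₀B, hρf⟩ := hρform
    obtain ⟨j, hj⟩ := zar_arch V hV hxV hxiV β
    have hc : ∀ m : ℕ, ∃ c : F, c ∈ B ∧ ρ ^ m = 1 + x * c := by
      intro m
      induction m with
      | zero => exact ⟨0, B.zero_mem, by simp⟩
      | succ m ih =>
        obtain ⟨c, hcB, hceq⟩ := ih
        refine ⟨c + ζ₀ + x * c * ζ₀, by
          exact B.add_mem (B.add_mem hcB hζ₀B) (B.mul_mem (B.mul_mem hxB hcB) hζ₀B), ?_⟩
        rw [pow_succ, hceq, hρf]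
        ring
    obtain ⟨c, hcB, hceq⟩ := hc j
    refine ⟨-(β * c), B.neg_mem (B.mul_mem hβ hcB), ?_⟩
    have h1 : β - x * -(β * c) = β * ρ ^ j := by rw [hceq]; ring
    have h2 : β * ρ ^ j = (β * x ^ j) * (ρ * x⁻¹) ^ j := by
      have hxj : x ^ j * x⁻¹ ^ j = 1 := by rw [← mul_pow, mul_inv_cancel₀ hx0, one_pow]
      rw [mul_pow]
      linear_combination (-(β * ρ ^ j)) * hxj
    rw [h1, h2]
    exact V.1.mul_mem hj (pow_mem hρV j)
  -- APPROX
  have approx : ∀ (L : ℕ) (β : F), β ∈ B →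
      ∃ η δ : F, η ∈ V.1 ⊓ B ∧ δ ∈ B ∧ β = η + x ^ L * δ := by
    intro L
    induction L with
    | zero =>
      intro β hβ
      exact ⟨0, β, Subring.zero_mem _, hβ, by simp⟩
    | succ L ih =>
      intro β hβ
      obtain ⟨η, δ, hη, hδ, heq⟩ := ih β hβ
      obtain ⟨δ', hδ', hv⟩ := step δ hδ
      refine ⟨η + x ^ L * (δ - x * δ'), δ', ?_, hδ', ?_⟩
      · refine Subring.add_mem _ hη (Subring.mul_mem _ (pow_mem hxD L) ?_)
        exact Subring.mem_inf.mpr ⟨hv, B.sub_mem hδ (B.mul_mem hxB hδ')⟩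
      · rw [heq, pow_succ]
        ring
  -- quotient field
  have hDQF : HasQFSet ((V.1 ⊓ B : Subring F) : Set F) := by
    intro t
    by_cases ht : t = 0
    · exact ⟨0, Subring.zero_mem _, 1, Subring.one_mem _, one_ne_zero, by simp [ht]⟩
    · obtain ⟨N, hNB, hNV⟩ := HQV t ht
      refine ⟨t * x ^ N, Subring.mem_inf.mpr ⟨hNV, hNB⟩, x ^ N,
        pow_mem hxD N, pow_ne_zero _ hx0, ?_⟩
      field_simp
  -- SUFF
  have suff : ∀ τ : F, τ ≠ 0 → τ ∈ V.1 →
      ∃ b c : F, b ∈ V.1 ⊓ B ∧ c ∈ V.1 ⊓ B ∧ b + c = 1 ∧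
        b * τ ∈ V.1 ⊓ B ∧ c * τ⁻¹ ∈ V.1 ⊓ B := by
    intro τ hτ0 hτV
    obtain ⟨N, hpB⟩ := HQ τ hτ0
    have hpV : τ * x ^ N ∈ V.1 := V.1.mul_mem hτV (pow_mem hxV N)
    obtain ⟨b₀, c₀, hb₀, hc₀, hbc₀, hb₀τ, hc₀τ⟩ := prufer_decomp hPB hτ0
    obtain ⟨η, r, hηD, hrB, heq⟩ := approx (2 * N) (c₀ * τ⁻¹) hc₀τ
    have hηV : η ∈ V.1 := (Subring.mem_inf.mp hηD).1
    have hηB : η ∈ B := (Subring.mem_inf.mp hηD).2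
    rw [two_mul, pow_add] at heq
    have hττ : τ * τ⁻¹ = 1 := mul_inv_cancel₀ hτ0
    have hceq : η * τ = c₀ - (τ * x ^ N) * (x ^ N * r) := by
      linear_combination c₀ * hττ - τ * heq
    have hcB : η * τ ∈ B := by
      rw [hceq]
      exact B.sub_mem hc₀ (B.mul_mem hpB (B.mul_mem (pow_mem hxB N) hrB))
    have hcV : η * τ ∈ V.1 := V.1.mul_mem hηV hτV
    have hcD : η * τ ∈ V.1 ⊓ B := Subring.mem_inf.mpr ⟨hcV, hcB⟩
    refine ⟨1 - η * τ, η * τ, ?_, hcD, by ring, ?_, ?_⟩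
    · exact Subring.sub_mem _ (Subring.one_mem _) hcD
    · refine Subring.mem_inf.mpr ⟨?_, ?_⟩
      · exact V.1.mul_mem (V.1.sub_mem V.1.one_mem hcV) hτV
      · have hb₀eq : b₀ = 1 - c₀ := by linear_combination hbc₀
        have hbτeq : (1 - η * τ) * τ = b₀ * τ + (τ * x ^ N) * ((τ * x ^ N) * r) := by
          rw [hb₀eq]
          linear_combination (-τ) * hceq
        rw [hbτeq]
        exact B.add_mem hb₀τ (B.mul_mem hpB (B.mul_mem hpB hrB))
    · have hfin : η * τ * τ⁻¹ = η := by
        field_simp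
      rw [hfin]
      exact hηD
  -- all τ
  have decompD : ∀ τ : F, τ ≠ 0 →
      ∃ b c : F, b ∈ V.1 ⊓ B ∧ c ∈ V.1 ⊓ B ∧ b + c = 1 ∧
        b * τ ∈ V.1 ⊓ B ∧ c * τ⁻¹ ∈ V.1 ⊓ B := by
    intro τ hτ
    by_cases hτV : τ ∈ V.1
    · exact suff τ hτ hτV
    · obtain ⟨b, c, hb, hc, hbc, h1, h2⟩ := suff τ⁻¹ (inv_ne_zero hτ) (zar_inv_mem hτV)
      rw [inv_inv] at h2
      exact ⟨c, b, hc, hb, by rw [add_comm]; exact hbc, h2, h1⟩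
  refine ⟨prufer_of_decomp hDQF decompD, ?_⟩
  refine g_of_denom hxD hx0 ?_
  intro t ht
  obtain ⟨N, hNB, hNV⟩ := HQV t ht
  exact ⟨N, Subring.mem_inf.mpr ⟨hNV, hNB⟩⟩

/-- The core step: intersecting a Prüfer G-domain with one rank one valuation ring. -/
lemma core_step (V : Zar F) (hV : RankOne V) (B : Subring F) (hB : IsPruferG B) :
    IsPruferG (V.1 ⊓ B) := by
  classical
  by_cases hsub : B ≤ V.1
  · rwa [inf_eq_right.mpr hsub]
  obtain ⟨d, hdB, hdV⟩ : ∃ d : F, d ∈ B ∧ d ∉ V.1 := by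
    rw [SetLike.le_def] at hsub
    push_neg at hsub
    exact hsub
  have hd0 : d ≠ 0 := zar_nonmem_ne_zero hdV
  obtain ⟨⟨hQFB, hPB⟩, ⟨x₀, hx₀0, hG⟩⟩ := hB
  have hx₀F : (x₀ : F) ≠ 0 := fun h => hx₀0 (Subtype.ext h)
  -- divisibility by powers of x₀
  have hdvd : ∀ b : F, b ∈ B → b ≠ 0 → ∃ (c : F) (n : ℕ), c ∈ B ∧ (x₀ : F) ^ n = c * b := by
    intro b hb hb0
    have hrad : x₀ ∈ (Ideal.span {(⟨b, hb⟩ : B)}).radical := by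
      rw [Ideal.radical_eq_sInf]
      rw [Ideal.mem_sInf]
      rintro J ⟨hJle, hJp⟩
      have hbJ : (⟨b, hb⟩ : B) ∈ J := hJle (Ideal.subset_span rfl)
      refine hG J hJp ?_
      intro hbot
      rw [hbot] at hbJ
      have : (⟨b, hb⟩ : B) = 0 := (Submodule.mem_bot _).mp hbJ
      exact hb0 (by simpa [Subtype.ext_iff] using this)
    obtain ⟨n, hn⟩ := Ideal.mem_radical_iff.mp hrad
    obtain ⟨c, hc⟩ := Ideal.mem_span_singleton'.mp hn
    refine ⟨(c : F), n, c.2, ?_⟩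
    have := congrArg (fun w : B => (w : F)) hc
    push_cast at this
    exact this.symm
  have HQx : ∀ t : F, ∃ N : ℕ, t * (x₀ : F) ^ N ∈ B := by
    intro t
    obtain ⟨a, haB, b, hbB, hb0, ht⟩ := hQFB t
    obtain ⟨c, n, hcB, hcb⟩ := hdvd b hbB hb0
    refine ⟨n, ?_⟩
    have : t * (x₀ : F) ^ n = a * c := by
      rw [ht, hcb]
      field_simp
    rw [this]
    exact B.mul_mem haB hcB
  by_cases hu : IsUnit x₀
  · -- B = ⊤, so V ⊓ B = V
    have hBtop : B = ⊤ := by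
      rw [Subring.eq_top_iff']
      intro t
      obtain ⟨N, hN⟩ := HQx t
      obtain ⟨y, hy⟩ := hu.exists_right_inv
      have hyF : (x₀ : F) * (y : F) = 1 := by
        have := congrArg (fun w : B => (w : F)) hy
        push_cast at this
        exact this
      have hxinvB : (x₀ : F)⁻¹ ∈ B := by
        have h : (y : F) = (x₀ : F)⁻¹ := eq_inv_of_mul_eq_one_left
          (by rw [mul_comm] at hyF; exact hyF)
        rw [← h]; exact y.2
      have : t = (t * (x₀ : F) ^ N) * ((x₀ : F)⁻¹) ^ N := by
        rw [mul_assoc, ← mul_pow, mul_inv_cancel₀ hx₀F, one_pow, mul_one]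
      rw [this]
      exact B.mul_mem hN (pow_mem hxinvB N)
    rw [hBtop, inf_top_eq]
    exact val_pruferG V hV
  · -- the unit trick
    have HU : ∀ ζ : F, ζ ∈ B → ∃ ξ : F, ξ ∈ B ∧ (1 + (x₀ : F) * ζ) * ξ = 1 := by
      intro ζ hζ
      have hunit : IsUnit ((1 : B) + x₀ * ⟨ζ, hζ⟩) := by
        by_contra hnu
        obtain ⟨M, hM, hle⟩ := Ideal.exists_le_maximal _
          ((Ideal.span_singleton_eq_top).not.mpr hnu)
        have hmem : (1 : B) + x₀ * ⟨ζ, hζ⟩ ∈ M := hle (Ideal.subset_span rfl)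
        have hMb : M ≠ ⊥ := by
          intro hbot
          rw [hbot] at hmem
          have h0 : (1 : B) + x₀ * ⟨ζ, hζ⟩ = 0 := (Submodule.mem_bot _).mp hmem
          apply hu
          refine IsUnit.of_mul_eq_one (a := x₀) (-⟨ζ, hζ⟩) ?_
          have : x₀ * ⟨ζ, hζ⟩ = -1 := by
            have := congrArg (fun w : B => w - 1) h0
            simpa using this
          rw [mul_neg, this, neg_neg]
        have hxM : x₀ ∈ M := hG M hM.isPrime hMb
        have h1M : (1 : B) ∈ M := by
          have := M.sub_mem hmem (M.mul_mem_right (⟨ζ, hζ⟩ : B) hxM)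
          simpa using this
        exact hM.ne_top ((Ideal.eq_top_iff_one _).mpr h1M)
      obtain ⟨y, hy⟩ := hunit.exists_right_inv
      refine ⟨(y : F), y.2, ?_⟩
      have := congrArg (fun w : B => (w : F)) hy
      push_cast at this
      exact this
    -- uniform application of main_core
    have apply_main : ∀ y : F, y ∈ B → y ≠ 0 → (x₀ : F) * y ∈ V.1 →
        ((x₀ : F) * y)⁻¹ ∉ V.1 → IsPruferG (V.1 ⊓ B) := by
      intro y hyB hy0 hv1 hv2
      refine main_core V hV B hPB hdB hdV (B.mul_mem x₀.2 hyB)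
        (mul_ne_zero hx₀F hy0) hv1 hv2 ?_ ?_
      · intro t ht
        obtain ⟨N, hN⟩ := HQx t
        refine ⟨N, ?_⟩
        have : t * ((x₀ : F) * y) ^ N = (t * (x₀ : F) ^ N) * y ^ N := by
          rw [mul_pow]; ring
        rw [this]
        exact B.mul_mem hN (pow_mem hyB N)
      · intro ζ hζ
        obtain ⟨ξ, hξ, heq⟩ := HU (y * ζ) (B.mul_mem hyB hζ)
        refine ⟨ξ, hξ, ?_⟩
        linear_combination heq
    by_cases h1 : (x₀ : F) ∈ V.1
    · by_cases h2 : (x₀ : F)⁻¹ ∈ V.1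
      · -- case (ii): v(x₀) = 0 ; use y = d⁻¹ * x₀^M
        obtain ⟨M, hM⟩ := HQx d⁻¹
        have he0 : d⁻¹ * (x₀ : F) ^ M ≠ 0 :=
          mul_ne_zero (inv_ne_zero hd0) (pow_ne_zero _ hx₀F)
        refine apply_main (d⁻¹ * (x₀ : F) ^ M) hM he0 ?_ ?_
        · have : (x₀ : F) * (d⁻¹ * (x₀ : F) ^ M) = d⁻¹ * (x₀ : F) ^ (M + 1) := by
            rw [pow_succ]; ring
          rw [this]
          exact V.1.mul_mem (zar_inv_mem hdV) (pow_mem h1 (M + 1))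
        · intro hcon
          apply hdV
          have heq : ((x₀ : F) * (d⁻¹ * (x₀ : F) ^ M))⁻¹ * (x₀ : F) ^ (M + 1) = d := by
            rw [pow_succ]
            field_simp
          rw [← heq]
          exact V.1.mul_mem hcon (pow_mem h1 (M + 1))
      · -- case (i): v(x₀) > 0 ; y = 1
        refine apply_main 1 B.one_mem one_ne_zero ?_ ?_
        · rwa [mul_one]
        · rwa [mul_one]
    · -- case (iii): v(x₀) < 0 ; y = (1 - x₀^4)⁻¹ ∈ B
      have hxinv : (x₀ : F)⁻¹ ∈ V.1 := zar_inv_mem h1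
      obtain ⟨ρ₃, hρ₃B, hρ₃eq⟩ := HU (-(x₀ : F) ^ 3) (B.neg_mem (pow_mem x₀.2 3))
      have hweq : (1 - (x₀ : F) ^ 4) * ρ₃ = 1 := by
        linear_combination hρ₃eq
      have hw0 : (1 : F) - (x₀ : F) ^ 4 ≠ 0 := by
        intro h
        rw [h, zero_mul] at hweq
        exact zero_ne_one hweq
      have hρ₃0 : ρ₃ ≠ 0 := by
        intro h
        rw [h, mul_zero] at hweq
        exact zero_ne_one hweq
      have hρ₃inv : ρ₃ = (1 - (x₀ : F) ^ 4)⁻¹ := eq_inv_of_mul_eq_one_left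
        (by rw [mul_comm] at hweq; exact hweq)
      have hx4 : -((x₀ : F) ^ 4) ∉ V.1 := by
        intro h
        apply h1
        have h4 : (x₀ : F) ^ 4 ∈ V.1 := by simpa using V.1.neg_mem h
        have : (x₀ : F) = (x₀ : F) ^ 4 * ((x₀ : F)⁻¹) ^ 3 := by
          field_simp
        rw [this]
        exact V.1.mul_mem h4 (pow_mem hxinv 3)
      have h1s : (1 : F) + -((x₀ : F) ^ 4) ∉ V.1 := by
        intro h
        exact hx4 (by simpa using V.1.sub_mem h V.1.one_mem)
      have hwinv : ((1 : F) - (x₀ : F) ^ 4)⁻¹ ∈ V.1 := by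
        have := zar_inv_mem h1s
        simpa [sub_eq_add_neg] using this
      have hsw : (x₀ : F) ^ 4 * ((1 : F) - (x₀ : F) ^ 4)⁻¹ ∈ V.1 := by
        have heq : (x₀ : F) ^ 4 * ((1 : F) - (x₀ : F) ^ 4)⁻¹ = (1 - (x₀:F)^4)⁻¹ - 1 := by
          field_simp
          ring
        rw [heq]
        exact V.1.sub_mem hwinv V.1.one_mem
      refine apply_main ρ₃ hρ₃B hρ₃0 ?_ ?_
      · have heq : (x₀ : F) * ρ₃ =
            ((x₀ : F) ^ 4 * ((1 : F) - (x₀ : F) ^ 4)⁻¹) * ((x₀ : F)⁻¹) ^ 3 := by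
          rw [hρ₃inv]
          field_simp
        rw [heq]
        exact V.1.mul_mem hsw (pow_mem hxinv 3)
      · intro hcon
        apply h1
        have heq : ((x₀ : F) * ρ₃)⁻¹ * ((x₀ : F) ^ 4 * ((1 : F) - (x₀ : F) ^ 4)⁻¹) =
            (x₀ : F) ^ 3 := by
          rw [hρ₃inv]
          field_simp
        have h3 : (x₀ : F) ^ 3 ∈ V.1 := heq ▸ V.1.mul_mem hcon hsw
        have : (x₀ : F) = (x₀ : F) ^ 3 * ((x₀ : F)⁻¹) ^ 2 := by
          field_simp
        rw [this]
        exact V.1.mul_mem h3 (pow_mem hxinv 2)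

end PruferAux

theorem stmt16 (n : ℕ) (V : Fin n → Zar F) (h1 : ∀ i, RankOne (V i))
    (B : Subring F) (hB : IsPruferG B) :
    IsPruferG ((⨅ i, (V i).1) ⊓ B) := by
  induction n generalizing B with
  | zero =>
    have : (⨅ i : Fin 0, (V i).1) = ⊤ := iInf_of_empty _
    rw [this, top_inf_eq]
    exact hB
  | succ n ih =>
    have heq : (⨅ i : Fin (n + 1), (V i).1) =
        (V 0).1 ⊓ (⨅ i : Fin n, (V i.succ).1) := by
      apply le_antisymm
      · exact le_inf (iInf_le _ 0) (le_iInf fun i => iInf_le _ i.succ)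
      · refine le_iInf fun i => ?_
        refine Fin.cases ?_ (fun j => ?_) i
        · exact inf_le_left
        · exact le_trans inf_le_right (iInf_le _ j)
    rw [heq, inf_assoc]
    exact core_step (V 0) (h1 0) _ (ih (fun i => V i.succ) (fun i => h1 i.succ) B hB)
end

section
/- Let A be an integral domain which is the intersection of finitely many valuation rings of its quotient field F. If A is local, then A is a valuation ring of F. -/
open Set

variable {F : Type*} [Field F]

/-- `x` is a nonzero element of the maximal ideal of `V`. -/
def Mm (V : Subring F) (x : F) : Prop := x ≠ 0 ∧ x ∈ V ∧ x⁻¹ ∉ V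

namespace Mm

variable {V : Subring F}

lemma mul {x y : F} (hx : Mm V x) (hy : y ∈ V) (hy0 : y ≠ 0) : Mm V (x * y) := by
  refine ⟨mul_ne_zero hx.1 hy0, V.mul_mem hx.2.1 hy, fun h => hx.2.2 ?_⟩
  have hxy : x⁻¹ = y * (x * y)⁻¹ := by
    rw [mul_inv, mul_comm x⁻¹, ← mul_assoc, mul_inv_cancel₀ hy0, one_mul]
  rw [hxy]; exact V.mul_mem hy h

lemma neg {x : F} (hx : Mm V x) : Mm V (-x) := by
  refine ⟨neg_ne_zero.2 hx.1, V.neg_mem hx.2.1, fun h => hx.2.2 ?_⟩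
  have := V.neg_mem h
  rwa [inv_neg, neg_neg] at this

lemma ne_one {x : F} (hx : Mm V x) : x ≠ 1 := by
  rintro rfl; exact hx.2.2 (by simpa using V.one_mem)

/-- `1 - x` is a unit of `V` when `x` is in the maximal ideal. -/
lemma unit_one_sub (hV : IsValSubring F V) {x : F} (hx : Mm V x) :
    (1 - x) ≠ 0 ∧ (1 - x) ∈ V ∧ (1 - x)⁻¹ ∈ V := by
  have hx0 := hx.1
  have h0 : (1:F) - x ≠ 0 := sub_ne_zero.2 (Ne.symm hx.ne_one)
  refine ⟨h0, V.sub_mem V.one_mem hx.2.1, ?_⟩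
  rcases hV (x / (1 - x)) (div_ne_zero hx.1 h0) with hq | hq
  · have h : (1 - x)⁻¹ = 1 + x / (1 - x) := by field_simp; ring
    rw [h]; exact V.add_mem V.one_mem hq
  · exfalso; apply hx.2.2
    rw [inv_div] at hq
    have h : x⁻¹ = 1 + (1 - x) / x := by field_simp; ring
    rw [h]; exact V.add_mem V.one_mem hq

end Mm

section Steps

variable {V : Subring F}

/-- `a ∈ m_V` (nonzero) implies `f a ∈ m_V`. -/
lemma step_P (hV : IsValSubring F V) {a : F} (ha : Mm V a) :
    Mm V (a ^ 2 / (a ^ 2 - a + 1)) := by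
  have hm : Mm V (a * (1 - a)) :=
    ha.mul (V.sub_mem V.one_mem ha.2.1) (sub_ne_zero.2 (Ne.symm ha.ne_one))
  obtain ⟨hd0, hdm, hdi⟩ := hm.unit_one_sub hV
  rw [show (1:F) - a * (1 - a) = a ^ 2 - a + 1 by ring] at hd0 hdm hdi
  refine ⟨div_ne_zero (pow_ne_zero 2 ha.1) hd0, ?_, fun h => ha.2.2 ?_⟩
  · rw [div_eq_mul_inv]
    exact V.mul_mem (V.pow_mem ha.2.1 2) hdi
  · have key : a⁻¹ = a * ((a ^ 2 / (a ^ 2 - a + 1))⁻¹ * (a ^ 2 - a + 1)⁻¹) := by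
      rw [div_eq_mul_inv, mul_inv, inv_inv]
      field_simp [ha.1]
      linear_combination -(mul_inv_cancel₀ hd0)
    rw [key]
    exact V.mul_mem ha.2.1 (V.mul_mem h hdi)

/-- `1 - a ∈ m_V` implies `1 - f a ∈ m_V`. -/
lemma step_O1 (hV : IsValSubring F V) {a : F} (hw : Mm V (1 - a)) :
    Mm V (1 - a ^ 2 / (a ^ 2 - a + 1)) := by
  have ha0 : a ≠ 0 := by
    rintro rfl
    exact hw.2.2 (by simpa using V.one_mem)
  have haV : a ∈ V := by
    have h := V.sub_mem V.one_mem hw.2.1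
    simpa using h
  have hm : Mm V ((1 - a) * a) := hw.mul haV ha0
  obtain ⟨hd0, hdm, hdi⟩ := hm.unit_one_sub hV
  rw [show (1:F) - (1 - a) * a = a ^ 2 - a + 1 by ring] at hd0 hdm hdi
  have hkey : 1 - a ^ 2 / (a ^ 2 - a + 1) = (1 - a) * (a ^ 2 - a + 1)⁻¹ := by
    field_simp
    linear_combination -(mul_inv_cancel₀ hd0)
  rw [hkey]
  exact hw.mul hdi (inv_ne_zero hd0)

/-- `a ∉ V` implies `1 - f a ∈ m_V`. -/
lemma step_N (hV : IsValSubring F V) {a : F} (hN : a ∉ V) :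
    Mm V (1 - a ^ 2 / (a ^ 2 - a + 1)) := by
  have ha0 : a ≠ 0 := fun h => hN (h ▸ V.zero_mem)
  have hiV : a⁻¹ ∈ V := (hV a ha0).resolve_left hN
  have hmi : Mm V a⁻¹ := ⟨inv_ne_zero ha0, hiV, by rwa [inv_inv]⟩
  have hz : Mm V (a⁻¹ * (1 - a⁻¹)) :=
    hmi.mul (V.sub_mem V.one_mem hiV) (sub_ne_zero.2 (Ne.symm hmi.ne_one))
  obtain ⟨he0, hem, hei⟩ := hz.unit_one_sub hV
  have hd : a ^ 2 - a + 1 = a ^ 2 * (1 - a⁻¹ * (1 - a⁻¹)) := by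
    field_simp
    ring
  have hd0 : a ^ 2 - a + 1 ≠ 0 := by
    rw [hd]; exact mul_ne_zero (pow_ne_zero 2 ha0) he0
  have hb : a ^ 2 / (a ^ 2 - a + 1) = (1 - a⁻¹ * (1 - a⁻¹))⁻¹ := by
    rw [hd, div_mul_eq_div_div, div_self (pow_ne_zero 2 ha0), one_div]
  have h1 : a⁻¹ * (1 - a⁻¹) = 1 - (1 - a⁻¹ * (1 - a⁻¹)) := by ring
  have key2 : ∀ e : F, e ≠ 0 → 1 - e⁻¹ = (1 - e) * -e⁻¹ := by
    intro e he
    have h : (1 - e) * -e⁻¹ = e * e⁻¹ - e⁻¹ := by ring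
    rw [h, mul_inv_cancel₀ he]
  have hkey : 1 - a ^ 2 / (a ^ 2 - a + 1) =
      (a⁻¹ * (1 - a⁻¹)) * (-(1 - a⁻¹ * (1 - a⁻¹))⁻¹) := by
    rw [hb, key2 _ he0]
    ring
  rw [hkey]
  exact hz.mul (V.neg_mem hei) (neg_ne_zero.2 (inv_ne_zero he0))

end Steps

theorem stmt18 (n : ℕ) (V : Fin n → Zar F)
    (hqf : HasQFSet (((⨅ i, (V i).1 : Subring F) : Subring F) : Set F))
    (hloc : IsLocalRing (⨅ i, (V i).1 : Subring F)) :
    IsValSubring F (⨅ i, (V i).1) := by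
  intro t ht
  by_contra hcon
  push_neg at hcon
  obtain ⟨h1, h2⟩ := hcon
  obtain ⟨i₀, hi₀⟩ : ∃ i, t ∉ (V i).1 := by
    by_contra h; push_neg at h; exact h1 (Subring.mem_iInf.2 h)
  obtain ⟨j₀, hj₀⟩ : ∃ i, t⁻¹ ∉ (V i).1 := by
    by_contra h; push_neg at h; exact h2 (Subring.mem_iInf.2 h)
  have htj : t ∈ (V j₀).1 := ((V j₀).2 t ht).resolve_right hj₀
  have hmt : Mm (V j₀).1 t := ⟨ht, htj, hj₀⟩
  have htm1 : t ≠ -1 := by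
    rintro rfl
    exact hi₀ ((V i₀).1.neg_mem (V i₀).1.one_mem)
  have h1t : (1 : F) + t ≠ 0 := fun h => htm1 (by linear_combination h)
  -- the iteration
  set f : F → F := fun a => a ^ 2 / (a ^ 2 - a + 1) with hf
  set s : ℕ → F := fun j => f^[j] (t / (1 + t)) with hs
  have hs0 : s 0 = t / (1 + t) := rfl
  have hsucc : ∀ j, s (j + 1) = (s j) ^ 2 / ((s j) ^ 2 - (s j) + 1) := by
    intro j
    have h : s (j + 1) = f (s j) := Function.iterate_succ_apply' f j _
    rw [h]
  -- initial invariants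
  obtain ⟨hu0, hum, hui⟩ := hmt.neg.unit_one_sub (V j₀).2
  rw [sub_neg_eq_add] at hu0 hum hui
  have hInv0 : Mm (V j₀).1 (s 0) := by
    rw [hs0, div_eq_mul_inv]
    exact hmt.mul hui (inv_ne_zero hu0)
  have hti' : t⁻¹ ∈ (V i₀).1 := ((V i₀).2 t ht).resolve_left hi₀
  have hmti : Mm (V i₀).1 t⁻¹ := ⟨inv_ne_zero ht, hti', by rwa [inv_inv]⟩
  obtain ⟨hv0, hvm, hvi⟩ := hmti.neg.unit_one_sub (V i₀).2
  rw [sub_neg_eq_add] at hv0 hvm hvi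
  have hInv0' : Mm (V i₀).1 (1 - s 0) := by
    have key : 1 - s 0 = t⁻¹ * (1 + t⁻¹)⁻¹ := by
      rw [hs0]
      field_simp
      linear_combination -(mul_inv_cancel₀ h1t)
    rw [key]
    exact hmti.mul hvi (inv_ne_zero hv0)
  have hInv : ∀ j, Mm (V j₀).1 (s j) ∧ Mm (V i₀).1 (1 - s j) := by
    intro j
    induction j with
    | zero => exact ⟨hInv0, hInv0'⟩
    | succ k ih =>
      rw [hsucc k]
      exact ⟨step_P (V j₀).2 ih.1, step_O1 (V i₀).2 ih.2⟩
  -- absorption: once outside `V i`, the sequence stays inside `V i` forever after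
  have habs : ∀ (i : Fin n) (k : ℕ), s k ∉ (V i).1 → ∀ m : ℕ, s (k + 1 + m) ∈ (V i).1 := by
    intro i k hk
    have hO : ∀ m : ℕ, Mm (V i).1 (1 - s (k + 1 + m)) := by
      intro m
      induction m with
      | zero =>
        rw [show k + 1 + 0 = k + 1 from rfl, hsucc k]
        exact step_N (V i).2 hk
      | succ m ih =>
        rw [show k + 1 + (m + 1) = (k + 1 + m) + 1 by omega, hsucc]
        exact step_O1 (V i).2 ih
    intro m
    have h := (V i).1.sub_mem (V i).1.one_mem (hO m).2.1
    simpa using h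
  -- pigeonhole: at some time, the sequence is in every `V i`
  have hgood : ∃ j : ℕ, ∀ i, s j ∈ (V i).1 := by
    by_contra hbad
    push_neg at hbad
    choose g hg using hbad
    have key : ∀ p q : ℕ, p < q → g p = g q → False := by
      intro p q hpq he
      have h := habs (g p) p (hg p) (q - p - 1)
      rw [show p + 1 + (q - p - 1) = q by omega, he] at h
      exact hg q h
    obtain ⟨j, k, hjk, hgjk⟩ :=
      Fintype.exists_ne_map_eq_of_card_lt (fun j : Fin (n + 1) => g (j : ℕ)) (by simp)
    have hne : (j : ℕ) ≠ (k : ℕ) := fun hh => hjk (Fin.ext hh)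
    rcases hne.lt_or_gt with h | h
    · exact key _ _ h hgjk
    · exact key _ _ h hgjk.symm
  obtain ⟨j, hj⟩ := hgood
  have hjA : s j ∈ (⨅ i, (V i).1 : Subring F) := Subring.mem_iInf.2 hj
  rcases IsLocalRing.isUnit_or_isUnit_one_sub_self
      (⟨s j, hjA⟩ : (⨅ i, (V i).1 : Subring F)) with hu | hu
  · obtain ⟨b, hb⟩ := isUnit_iff_exists_inv.1 hu
    have hb1 : s j * (b : F) = 1 := by
      have h := congrArg Subtype.val hb
      push_cast at h
      exact h
    have hmem : (s j)⁻¹ ∈ (V j₀).1 := by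
      rw [inv_eq_of_mul_eq_one_right hb1]
      exact Subring.mem_iInf.1 b.2 j₀
    exact (hInv j).1.2.2 hmem
  · obtain ⟨b, hb⟩ := isUnit_iff_exists_inv.1 hu
    have hb1 : (1 - s j) * (b : F) = 1 := by
      have h := congrArg Subtype.val hb
      push_cast at h
      exact_mod_cast h
    have hmem : (1 - s j)⁻¹ ∈ (V i₀).1 := by
      rw [inv_eq_of_mul_eq_one_right hb1]
      exact Subring.mem_iInf.1 b.2 i₀
    exact (hInv j).2.2.2 hmem
end

section
/- Let A be a Prüfer domain with quotient field F whose Jacobson radical is nonzero, such that all but finitely many maximal ideals of A have height one and are the radical of a finitely generated ideal. Then there exists X ⊆ Zar(F) with A = ⋂_{V∈X} V, J(X) = ⋂_{V∈X} 𝔪_V ≠ 0, all but finitely many members of X of rank one, and such that the set of minimal elements (under inclusion) of the set of patch limit points of X is finite. -/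
open Set

variable {F : Type*} [Field F]

section MyAux

variable {F : Type*} [Field F]

lemma zar_isOpen_mem (x : F) : IsOpen {V : Zar F | x ∈ V.1} :=
  TopologicalSpace.GenerateOpen.basic _ (Or.inl ⟨x, rfl⟩)

lemma zar_isOpen_not_mem (y : F) : IsOpen {V : Zar F | y ∉ V.1} :=
  TopologicalSpace.GenerateOpen.basic _ (Or.inr ⟨y, rfl⟩)

lemma mIdeal_zero (V : Zar F) : (0:F) ∈ mIdeal V := ⟨V.1.zero_mem, Or.inl rfl⟩

lemma inv_not_mem_of_mIdeal {V : Zar F} {y : F} (hy : y ∈ mIdeal V) (hy0 : y ≠ 0) :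
    y⁻¹ ∉ V.1 := by
  rcases hy.2 with h | h
  · exact absurd h hy0
  · exact h

lemma inv_mem_of_not_mIdeal {V : Zar F} {y : F} (hy : y ∈ V.1) (hny : y ∉ mIdeal V)
    (hy0 : y ≠ 0) : y⁻¹ ∈ V.1 := by
  by_contra h
  exact hny ⟨hy, Or.inr h⟩

lemma mem_mIdeal_of_inv_not_mem {V : Zar F} {y : F} (hy : y ∈ V.1) (h : y⁻¹ ∉ V.1) :
    y ∈ mIdeal V := ⟨hy, Or.inr h⟩

lemma mIdeal_mul {V : Zar F} {y w : F} (hy : y ∈ mIdeal V) (hw : w ∈ V.1) :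
    y * w ∈ mIdeal V := by
  refine ⟨V.1.mul_mem hy.1 hw, ?_⟩
  rcases eq_or_ne (y * w) 0 with h | h
  · exact Or.inl h
  · refine Or.inr fun hinv => ?_
    have hy0 : y ≠ 0 := left_ne_zero_of_mul h
    have hw0 : w ≠ 0 := right_ne_zero_of_mul h
    apply inv_not_mem_of_mIdeal hy hy0
    have he : y⁻¹ = w * (y * w)⁻¹ := by field_simp
    rw [he]
    exact V.1.mul_mem hw hinv

lemma mIdeal_add {V : Zar F} {y z : F} (hy : y ∈ mIdeal V) (hz : z ∈ mIdeal V) :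
    y + z ∈ mIdeal V := by
  refine ⟨V.1.add_mem hy.1 hz.1, ?_⟩
  rcases eq_or_ne (y + z) 0 with h | h
  · exact Or.inl h
  refine Or.inr fun hinv => ?_
  rcases eq_or_ne y 0 with hy0 | hy0
  · rcases eq_or_ne z 0 with hz0 | hz0
    · exact h (by rw [hy0, hz0, add_zero])
    · exact inv_not_mem_of_mIdeal hz hz0 (by rwa [hy0, zero_add] at hinv)
  rcases eq_or_ne z 0 with hz0 | hz0
  · exact inv_not_mem_of_mIdeal hy hy0 (by rwa [hz0, add_zero] at hinv)
  rcases V.2 (y * z⁻¹) (mul_ne_zero hy0 (inv_ne_zero hz0)) with hv | hv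
  · apply inv_not_mem_of_mIdeal hz hz0
    have he : z⁻¹ = (y + z)⁻¹ * (y * z⁻¹ + 1) := by field_simp
    rw [he]
    exact V.1.mul_mem hinv (V.1.add_mem hv V.1.one_mem)
  · apply inv_not_mem_of_mIdeal hy hy0
    have hv' : y⁻¹ * z ∈ V.1 := by
      have : (y * z⁻¹)⁻¹ = y⁻¹ * z := by field_simp
      rwa [this] at hv
    have he : y⁻¹ = (y + z)⁻¹ * (1 + y⁻¹ * z) := by field_simp
    rw [he]
    exact V.1.mul_mem hinv (V.1.add_mem V.1.one_mem hv')

end MyAux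

section MyAux2

variable {F : Type*} [Field F]

/-- The localization of `A` at a prime `M`, as a subring of `F`. -/
def locSub (A : Subring F) (M : Ideal A) (hM : M.IsPrime) : Subring F where
  carrier := locSet A M
  zero_mem' := ⟨0, 1, fun h => hM.ne_top ((Ideal.eq_top_iff_one M).mpr h), one_ne_zero,
    by push_cast; simp⟩
  one_mem' := ⟨1, 1, fun h => hM.ne_top ((Ideal.eq_top_iff_one M).mpr h), one_ne_zero,
    by push_cast; simp⟩
  add_mem' := by
    rintro x y ⟨a, b, hb, hb0, rfl⟩ ⟨c, d, hd, hd0, rfl⟩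
    refine ⟨a * d + c * b, b * d, fun h => ?_, by push_cast; exact mul_ne_zero hb0 hd0, ?_⟩
    · rcases hM.mem_or_mem h with h | h
      exacts [hb h, hd h]
    · push_cast
      field_simp
  mul_mem' := by
    rintro x y ⟨a, b, hb, hb0, rfl⟩ ⟨c, d, hd, hd0, rfl⟩
    refine ⟨a * c, b * d, fun h => ?_, by push_cast; exact mul_ne_zero hb0 hd0, ?_⟩
    · rcases hM.mem_or_mem h with h | h
      exacts [hb h, hd h]
    · push_cast
      field_simp
  neg_mem' := by
    rintro x ⟨a, b, hb, hb0, rfl⟩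
    exact ⟨-a, b, hb, hb0, by push_cast; field_simp⟩

@[simp] lemma mem_locSub {A : Subring F} {M : Ideal A} {hM : M.IsPrime} {x : F} :
    x ∈ locSub A M hM ↔ x ∈ locSet A M := Iff.rfl

lemma coe_mem_locSet {A : Subring F} {M : Ideal A} (hM : M ≠ ⊤) (a : A) :
    (a : F) ∈ locSet A M :=
  ⟨a, 1, fun h => hM ((Ideal.eq_top_iff_one M).mpr h), one_ne_zero, by push_cast; simp⟩

lemma inv_not_mem_locSet {A : Subring F} {M : Ideal A} {x : A} (hx : x ∈ M)
    (hx0 : (x : F) ≠ 0) : ((x : F))⁻¹ ∉ locSet A M := by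
  rintro ⟨a, b, hbM, hb0, heq⟩
  apply hbM
  have h : (b : F) = (a : F) * (x : F) := by
    field_simp at heq
    rw [mul_comm]; exact heq
  have hb : b = a * x := by exact_mod_cast h
  rw [hb]
  exact M.mul_mem_left a hx

/-- The valuation ring `A_M` for `M` maximal, as an element of `Zar F`. -/
def zOf (A : Subring F) (hP : IsPruferOf A) (M : Ideal A) (hM : M.IsMaximal) : Zar F :=
  ⟨locSub A M hM.isPrime, fun t ht => hP.2 M hM t ht⟩

lemma mem_M_of_coe_mem_mIdeal {A : Subring F} (hP : IsPruferOf A) {M : Ideal A}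
    (hM : M.IsMaximal) {b : A} (hb : (b : F) ∈ mIdeal (zOf A hP M hM)) : b ∈ M := by
  by_contra hbM
  have hb0 : b ≠ 0 := fun h => hbM (h ▸ M.zero_mem)
  have hb0' : (b : F) ≠ 0 := fun h => hb0 (Subtype.ext h)
  apply inv_not_mem_of_mIdeal hb hb0'
  exact ⟨1, b, hbM, hb0', by push_cast; field_simp⟩

end MyAux2

section MyAux3

variable {F : Type*} [Field F]

/-- The contraction of the maximal ideal of a valuation overring `W` of `A`. -/
def contrIdeal (A : Subring F) (W : Zar F) (hAW : ∀ a : A, (a : F) ∈ W.1) : Ideal A where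
  carrier := {b : A | (b : F) ∈ mIdeal W}
  zero_mem' := by simpa using mIdeal_zero W
  add_mem' := fun {a b} ha hb => by
    show ((a + b : A) : F) ∈ mIdeal W
    push_cast
    exact mIdeal_add ha hb
  smul_mem' := fun c b hb => by
    show ((c * b : A) : F) ∈ mIdeal W
    push_cast
    rw [mul_comm]
    exact mIdeal_mul hb (hAW c)

lemma mem_contrIdeal {A : Subring F} {W : Zar F} {hAW : ∀ a : A, (a : F) ∈ W.1} {b : A} :
    b ∈ contrIdeal A W hAW ↔ (b : F) ∈ mIdeal W := Iff.rfl

lemma contrIdeal_isPrime (A : Subring F) (W : Zar F) (hAW : ∀ a : A, (a : F) ∈ W.1) :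
    (contrIdeal A W hAW).IsPrime := by
  constructor
  · intro h
    have h1 : ((1 : A) : F) ∈ mIdeal W := (Ideal.eq_top_iff_one _).mp h
    rcases h1.2 with h0 | hni
    · exact one_ne_zero (by exact_mod_cast h0)
    · exact hni (by simpa using W.1.one_mem)
  · intro a b hab
    by_contra hc
    push_neg at hc
    obtain ⟨ha, hb⟩ := hc
    rw [mem_contrIdeal] at ha hb hab
    have ha0 : (a : F) ≠ 0 := fun h => ha (h ▸ mIdeal_zero W)
    have hb0 : (b : F) ≠ 0 := fun h => hb (h ▸ mIdeal_zero W)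
    have hai : (a : F)⁻¹ ∈ W.1 := inv_mem_of_not_mIdeal (hAW a) ha ha0
    have hbi : (b : F)⁻¹ ∈ W.1 := inv_mem_of_not_mIdeal (hAW b) hb hb0
    apply inv_not_mem_of_mIdeal hab (by push_cast; exact mul_ne_zero ha0 hb0)
    push_cast
    rw [mul_inv]
    exact W.1.mul_mem hai hbi

/-- Two valuation rings containing a common valuation subring are comparable. -/
lemma zar_comparable (B : Subring F) (hB : ∀ t : F, t ≠ 0 → t ∈ B ∨ t⁻¹ ∈ B)
    (V₁ V₂ : Zar F) (h1 : ∀ y ∈ B, y ∈ V₁.1) (h2 : ∀ y ∈ B, y ∈ V₂.1) :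
    V₁.1 ≤ V₂.1 ∨ V₂.1 ≤ V₁.1 := by
  by_contra hc
  push_neg at hc
  obtain ⟨hn1, hn2⟩ := hc
  obtain ⟨t, ht1, ht2⟩ := SetLike.not_le_iff_exists.mp hn1
  obtain ⟨s, hs2, hs1⟩ := SetLike.not_le_iff_exists.mp hn2
  have ht0 : t ≠ 0 := fun h => ht2 (h ▸ V₂.1.zero_mem)
  have hs0 : s ≠ 0 := fun h => hs1 (h ▸ V₁.1.zero_mem)
  rcases hB (t * s⁻¹) (mul_ne_zero ht0 (inv_ne_zero hs0)) with h | h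
  · apply ht2
    have he : t = t * s⁻¹ * s := by field_simp
    rw [he]
    exact V₂.1.mul_mem (h2 _ h) hs2
  · apply hs1
    have he : s = (t * s⁻¹)⁻¹ * t := by field_simp
    rw [he]
    exact V₁.1.mul_mem (h1 _ h) ht1

/-- `A_M` has rank one when `M` is a nonzero height-one maximal ideal. -/
lemma rankOne_zOf (A : Subring F) (hP : IsPruferOf A) (M : Ideal A) (hM : M.IsMaximal)
    (hne : M ≠ ⊥) (hht : ∀ P : Ideal A, P.IsPrime → P < M → P = ⊥) :
    RankOne (zOf A hP M hM) := by
  have hAloc : ∀ a : A, (a : F) ∈ (zOf A hP M hM).1 := fun a =>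
    coe_mem_locSet hM.ne_top a
  constructor
  · intro htop
    obtain ⟨a, haM, ha0⟩ := Submodule.exists_mem_ne_zero_of_ne_bot hne
    have ha0' : (a : F) ≠ 0 := fun h => ha0 (Subtype.ext h)
    apply inv_not_mem_locSet haM ha0'
    have : ((a : F))⁻¹ ∈ (⊤ : Subring F) := Subring.mem_top _
    rw [← htop] at this
    exact this
  · intro W hle hWtop
    have hAW : ∀ a : A, (a : F) ∈ W.1 := fun a => hle (hAloc a)
    set P := contrIdeal A W hAW with hP_def
    have hPprime := contrIdeal_isPrime A W hAW
    have hPM : P ≤ M := by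
      intro b hb
      by_contra hbM
      have hb0 : b ≠ 0 := fun h => hbM (h ▸ M.zero_mem)
      have hb0' : (b : F) ≠ 0 := fun h => hb0 (Subtype.ext h)
      apply inv_not_mem_of_mIdeal (mem_contrIdeal.mp hb) hb0'
      apply hle
      exact ⟨1, b, hbM, hb0', by push_cast; field_simp⟩
    rcases eq_or_lt_of_le hPM with hPeq | hPlt
    · -- P = M : W ≤ loc
      refine le_antisymm ?_ hle
      intro t ht
      rcases eq_or_ne t 0 with rfl | ht0
      · exact (zOf A hP M hM).1.zero_mem
      rcases hP.2 M hM t ht0 with h | h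
      · exact h
      obtain ⟨a, b, hbM, hb0, heq⟩ := h
      by_cases haM : a ∈ M
      · exfalso
        have haP : (a : F) ∈ mIdeal W := mem_contrIdeal.mp (hPeq ▸ haM)
        have hbP : b ∉ P := fun hb => hbM (hPeq ▸ hb)
        have hbW : (b : F) ∉ mIdeal W := fun h => hbP (mem_contrIdeal.mpr h)
        have hbi : (b : F)⁻¹ ∈ W.1 := inv_mem_of_not_mIdeal (hAW b) hbW hb0
        have hti : t⁻¹ ∈ mIdeal W := by
          rw [heq, div_eq_mul_inv]
          exact mIdeal_mul haP hbi
        have hti0 : t⁻¹ ≠ 0 := inv_ne_zero ht0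
        have := inv_not_mem_of_mIdeal hti hti0
        rw [inv_inv] at this
        exact this ht
      · have ha0 : a ≠ 0 := fun h => haM (h ▸ M.zero_mem)
        have ha0' : (a : F) ≠ 0 := fun h => ha0 (Subtype.ext h)
        refine ⟨b, a, haM, ha0', ?_⟩
        have := congrArg (·⁻¹) heq
        simpa [inv_div] using this
    · -- P < M hence P = ⊥, so W = ⊤, contradiction
      exfalso
      apply hWtop
      have hPbot : P = ⊥ := hht P hPprime hPlt
      ext t
      simp only [Subring.mem_top, iff_true]
      rcases eq_or_ne t 0 with rfl | ht0
      · exact W.1.zero_mem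
      by_contra htW
      rcases hP.2 M hM t ht0 with h | h
      · exact htW (hle h)
      obtain ⟨a, b, hbM, hb0, heq⟩ := h
      have htiW : t⁻¹ ∈ W.1 := hle ⟨a, b, hbM, hb0, heq⟩
      have hti : t⁻¹ ∈ mIdeal W := mem_mIdeal_of_inv_not_mem htiW (by rwa [inv_inv])
      have haW : (a : F) ∈ mIdeal W := by
        have he : (a : F) = t⁻¹ * (b : F) := by rw [heq]; field_simp
        rw [he]
        exact mIdeal_mul hti (hAW b)
      have haP : a ∈ P := mem_contrIdeal.mpr haW
      rw [hPbot] at haP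
      have ha0 : a = 0 := by simpa using haP
      rw [ha0] at heq
      simp at heq
      exact ht0 heq
end MyAux3

section MyAux4

variable {F : Type*} [Field F]

lemma my_finite_of_rel {α β : Type*} {S : Set α} {T : Set β} (hT : T.Finite)
    (R : α → β → Prop) (hex : ∀ v ∈ S, ∃ m ∈ T, R v m)
    (hinj : ∀ v₁ ∈ S, ∀ v₂ ∈ S, ∀ m ∈ T, R v₁ m → R v₂ m → v₁ = v₂) : S.Finite := by
  haveI := hT.to_subtype
  rw [← Set.finite_coe_iff]
  have g : ∀ v : S, ∃ m : T, R v.1 m.1 := fun v => by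
    obtain ⟨m, hm, hr⟩ := hex v.1 v.2
    exact ⟨⟨m, hm⟩, hr⟩
  choose f hf using g
  refine Finite.of_injective f fun v₁ v₂ h => Subtype.ext ?_
  exact hinj _ v₁.2 _ v₂.2 _ (f v₁).2 (hf v₁) (by rw [h]; exact hf v₂)

/-- The set `X = {A_M : M maximal}` inside `Zar F`. -/
def XSet (A : Subring F) (hP : IsPruferOf A) : Set (Zar F) :=
  {V | ∃ M : Ideal A, ∃ h : M.IsMaximal, V = zOf A hP M h}

lemma limPts_coe_mem {A : Subring F} {hP : IsPruferOf A} {V : Zar F}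
    (hV : V ∈ limPts (XSet A hP)) (a : A) : (a : F) ∈ V.1 := by
  by_contra h
  obtain ⟨W, hWX, -, hWU⟩ := hV _ (zar_isOpen_not_mem (a : F)) h
  obtain ⟨M, hM, rfl⟩ := hWX
  exact hWU (coe_mem_locSet hM.ne_top a)

lemma limPts_jac_mem {A : Subring F} {hP : IsPruferOf A} {V : Zar F}
    (hV : V ∈ limPts (XSet A hP)) {x : A} (hx0 : (x : F) ≠ 0)
    (hx : ∀ M : Ideal A, M.IsMaximal → x ∈ M) : (x : F) ∈ mIdeal V := by
  refine ⟨limPts_coe_mem hV x, Or.inr fun hinv => ?_⟩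
  obtain ⟨W, hWX, -, hWU⟩ := hV _ (zar_isOpen_mem ((x : F))⁻¹) hinv
  obtain ⟨M, hM, rfl⟩ := hWX
  exact inv_not_mem_locSet (hx M hM) hx0 hWU

/-- No limit point of `X` has its center containing a "good" maximal ideal. -/
lemma limPts_not_good_le {A : Subring F} {hP : IsPruferOf A} {V : Zar F}
    (hV : V ∈ limPts (XSet A hP)) {M : Ideal A} (hM : M.IsMaximal)
    (hrad : ∃ I : Ideal A, I.FG ∧ I.radical = M)
    (hle : ∀ b : A, b ∈ M → (b : F) ∈ mIdeal V) : False := by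
  obtain ⟨I, ⟨s, hs⟩, hrI⟩ := hrad
  set U₀ : Set (Zar F) := ⋂ a ∈ s, {W : Zar F | (a : F) ∈ mIdeal W} with hU₀
  have hU₀open : IsOpen U₀ := by
    refine isOpen_biInter_finset fun a _ => ?_
    rcases eq_or_ne ((a : F)) 0 with h0 | h0
    · have : {W : Zar F | (a : F) ∈ mIdeal W} = Set.univ := by
        ext W
        simp [h0, mIdeal_zero W]
      rw [this]
      exact isOpen_univ
    · have : {W : Zar F | (a : F) ∈ mIdeal W} =
          {W : Zar F | (a : F) ∈ W.1} ∩ {W : Zar F | ((a : F))⁻¹ ∉ W.1} := by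
        ext W
        simp [mIdeal, Set.mem_setOf_eq, h0]
      rw [this]
      exact (zar_isOpen_mem _).inter (zar_isOpen_not_mem _)
  have hsM : ∀ a ∈ s, a ∈ M := by
    intro a ha
    have : a ∈ I := hs ▸ Ideal.subset_span ha
    exact hrI ▸ Ideal.le_radical this
  have hVU₀ : V ∈ U₀ := by
    rw [hU₀]
    exact Set.mem_biInter fun a ha => hle a (hsM a ha)
  -- every member of X lying in U₀ is A_M
  have hXU : ∀ W ∈ XSet A hP, W ∈ U₀ → W = zOf A hP M hM := by
    rintro W ⟨N, hN, rfl⟩ hWU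
    have hIN : I ≤ N := by
      rw [← hs, Ideal.span_le]
      rintro b hb
      have hbm : (b : F) ∈ mIdeal (zOf A hP N hN) := by
        simp only [hU₀, Set.mem_iInter] at hWU
        exact hWU b hb
      exact mem_M_of_coe_mem_mIdeal hP hN hbm
    have hMN : M ≤ N := by
      rw [← hrI]
      calc I.radical ≤ N.radical := Ideal.radical_mono hIN
        _ = N := hN.isPrime.radical
    have : M = N := (hM.eq_of_le hN.ne_top hMN)
    subst this
    rfl
  -- V is in U₀ and a limit point: derive two distinct members forcing contradiction
  obtain ⟨W₁, hW₁X, hW₁ne, hW₁U⟩ := hV U₀ hU₀open hVU₀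
  have hW₁eq := hXU W₁ hW₁X hW₁U
  have hVne : V ≠ zOf A hP M hM := fun h => hW₁ne (hW₁eq.trans h.symm)
  have hVne' : V.1 ≠ (zOf A hP M hM).1 := fun h => hVne (Subtype.ext h)
  have hex : ∃ t : F, (t ∈ (zOf A hP M hM).1 ∧ t ∉ V.1) ∨ (t ∉ (zOf A hP M hM).1 ∧ t ∈ V.1) := by
    by_contra hc
    push_neg at hc
    apply hVne'
    ext t
    have := hc t
    tauto
  obtain ⟨t, ht⟩ := hex
  rcases ht with ⟨htL, htV⟩ | ⟨htL, htV⟩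
  · obtain ⟨W₂, hW₂X, -, hW₂U⟩ := hV (U₀ ∩ {W : Zar F | t ∉ W.1})
      (hU₀open.inter (zar_isOpen_not_mem t)) ⟨hVU₀, htV⟩
    have := hXU W₂ hW₂X hW₂U.1
    exact hW₂U.2 (this ▸ htL)
  · obtain ⟨W₂, hW₂X, -, hW₂U⟩ := hV (U₀ ∩ {W : Zar F | t ∈ W.1})
      (hU₀open.inter (zar_isOpen_mem t)) ⟨hVU₀, htV⟩
    have := hXU W₂ hW₂X hW₂U.1
    exact htL (this ▸ hW₂U.2)

end MyAux4

section MyAux5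

variable {F : Type*} [Field F]

/-- The ideal of denominators of `t` over `A`. -/
def denomIdeal (A : Subring F) (t : F) : Ideal A where
  carrier := {b : A | ∃ c : A, (b : F) * t = (c : F)}
  zero_mem' := ⟨0, by push_cast; ring⟩
  add_mem' := fun {a b} ha hb => by
    obtain ⟨c, hc⟩ := ha
    obtain ⟨d, hd⟩ := hb
    exact ⟨c + d, by push_cast; rw [add_mul, hc, hd]⟩
  smul_mem' := fun r b hb => by
    obtain ⟨c, hc⟩ := hb
    exact ⟨r * c, by push_cast [smul_eq_mul]; rw [mul_assoc, hc]⟩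

end MyAux5


theorem stmt19 (A : Subring F) (hP : IsPruferOf A)
    (hJac : ∃ x : A, x ≠ 0 ∧ ∀ M : Ideal A, M.IsMaximal → x ∈ M)
    (hfin : {M : Ideal A | M.IsMaximal ∧
      ¬ ((M ≠ ⊥ ∧ ∀ P : Ideal A, P.IsPrime → P < M → P = ⊥) ∧
         ∃ I : Ideal A, I.FG ∧ I.radical = M)}.Finite) :
    ∃ X : Set (Zar F), (A : Set F) = aSet X ∧ jSet X ≠ {0} ∧
      {V ∈ X | ¬ RankOne V}.Finite ∧
      {V ∈ limPts X | ∀ W ∈ limPts X, W.1 ≤ V.1 → W = V}.Finite := by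
  obtain ⟨x, hxne, hxJ⟩ := hJac
  have hx0 : (x : F) ≠ 0 := fun h => hxne (Subtype.ext h)
  refine ⟨XSet A hP, ?_, ?_, ?_, ?_⟩
  · -- A = aSet X
    ext t
    simp only [aSet, Set.mem_iInter, SetLike.mem_coe]
    constructor
    · rintro ht V ⟨M, hM, rfl⟩
      exact coe_mem_locSet hM.ne_top ⟨t, ht⟩
    · intro ht
      by_cases hI : denomIdeal A t = ⊤
      · obtain ⟨c, hc⟩ : (1 : A) ∈ denomIdeal A t := hI ▸ Submodule.mem_top
        rw [Subring.coe_one, one_mul] at hc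
        rw [hc]
        exact c.2
      · obtain ⟨M, hM, hle⟩ := Ideal.exists_le_maximal _ hI
        obtain ⟨a, b, hbM, hb0, heq⟩ := ht (zOf A hP M hM) ⟨M, hM, rfl⟩
        refine absurd (hle (?_ : b ∈ denomIdeal A t)) hbM
        exact ⟨a, by rw [heq]; field_simp⟩
  · -- jSet ≠ {0}
    have hxj : (x : F) ∈ jSet (XSet A hP) := by
      simp only [jSet, Set.mem_iInter]
      rintro V ⟨M, hM, rfl⟩
      exact ⟨coe_mem_locSet hM.ne_top x, Or.inr (inv_not_mem_locSet (hxJ M hM) hx0)⟩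
    intro h
    rw [h] at hxj
    exact hx0 hxj
  · -- all but finitely many of rank one
    refine my_finite_of_rel hfin (fun V M => (V.1 : Set F) = locSet A M) ?_ ?_
    · rintro V ⟨⟨M, hM, rfl⟩, hnro⟩
      refine ⟨M, ⟨hM, fun hgood => hnro ?_⟩, rfl⟩
      exact rankOne_zOf A hP M hM hgood.1.1 hgood.1.2
    · rintro V₁ - V₂ - M - h₁ h₂
      exact Subtype.ext (SetLike.coe_injective (h₁.trans h₂.symm))
  · -- minimal limit points are finite
    refine my_finite_of_rel hfin (fun V M => ∀ y ∈ locSet A M, y ∈ V.1) ?_ ?_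
    · rintro V ⟨hVlim, -⟩
      have hAV : ∀ a : A, (a : F) ∈ V.1 := fun a => limPts_coe_mem hVlim a
      set P := contrIdeal A V hAV with hPdef
      have hPprime := contrIdeal_isPrime A V hAV
      obtain ⟨M₀, hM₀, hPM₀⟩ := Ideal.exists_le_maximal P hPprime.ne_top
      have hxP : x ∈ P := mem_contrIdeal.mpr (limPts_jac_mem hVlim hx0 hxJ)
      have hbad : M₀ ∈ {M : Ideal A | M.IsMaximal ∧
          ¬ ((M ≠ ⊥ ∧ ∀ P : Ideal A, P.IsPrime → P < M → P = ⊥) ∧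
            ∃ I : Ideal A, I.FG ∧ I.radical = M)} := by
        refine ⟨hM₀, fun hgood => ?_⟩
        obtain ⟨⟨-, hht⟩, hrad⟩ := hgood
        have hPeq : P = M₀ := by
          rcases eq_or_lt_of_le hPM₀ with h | h
          · exact h
          · exfalso
            have := hht P hPprime h
            rw [this] at hxP
            exact hxne (by simpa using hxP)
        exact limPts_not_good_le hVlim hM₀ hrad
          (fun b hb => mem_contrIdeal.mp (hPeq ▸ hb : b ∈ P))
      refine ⟨M₀, hbad, ?_⟩
      rintro y ⟨a, b, hbM, hb0, rfl⟩
      have hbP : b ∉ P := fun h => hbM (hPM₀ h)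
      have hbV : ((b : F))⁻¹ ∈ V.1 :=
        inv_mem_of_not_mIdeal (hAV b) (fun h => hbP (mem_contrIdeal.mpr h)) hb0
      rw [div_eq_mul_inv]
      exact V.1.mul_mem (hAV a) hbV
    · rintro V₁ ⟨h1lim, h1min⟩ V₂ ⟨h2lim, h2min⟩ M ⟨hMmax, -⟩ hR1 hR2
      have hcomp := zar_comparable (locSub A M hMmax.isPrime)
        (fun t ht => hP.2 M hMmax t ht) V₁ V₂ (fun y hy => hR1 y hy) (fun y hy => hR2 y hy)
      rcases hcomp with h | h
      · exact h2min V₁ h1lim h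
      · exact (h1min V₂ h2lim h).symm
end
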